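/- Let C₁, C₂ be n × n real symmetric positive definite matrices, and define ρ_HG(C₁, C₂) := log(sSup S) − log(sInf S), where S := spectrum ℝ (C₁⁻¹·C₂) is the (nonempty, finite, positive) real spectrum of C₁⁻¹·C₂. Then: (i) ρ_HG(C₁, C₂) = ρ_HG(C₁⁻¹, C₂⁻¹); and (ii) for all invertible n × n real matrices A and B, spectrum ℝ ((A·C₁·B)⁻¹·(A·C₂·B)) = spectrum ℝ (C₁⁻¹·C₂), hence ρ_HG(A·C₁·B, A·C₂·B) = ρ_HG(C₁, C₂) (invariance of Hilbert's projective matrix metric under left-right multiplication by invertible matrices and under inversion). -/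

import Mathlib

open scoped Matrix

section Aux

variable {n : ℕ}

/-- Conjugation `X⁻¹ a X` by an invertible matrix preserves the real spectrum. -/
lemma spec_conj (X a : Matrix (Fin n) (Fin n) ℝ) (hX : IsUnit X) :
    spectrum ℝ (X⁻¹ * a * X) = spectrum ℝ a := by
  obtain ⟨u, rfl⟩ := hX
  rw [← Matrix.coe_units_inv]
  exact spectrum.units_conjugate'

/-- The real spectrum of the inverse of an invertible matrix is the pointwise inverse. -/
lemma spec_inv (X : Matrix (Fin n) (Fin n) ℝ) (hX : IsUnit X) :
    spectrum ℝ X⁻¹ = (spectrum ℝ X)⁻¹ := by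
  obtain ⟨u, rfl⟩ := hX
  rw [← Matrix.coe_units_inv, ← spectrum.map_inv]

/-- `Bᴴ A B` is positive definite when `A` is and `B` is invertible. -/
lemma posDef_conj {A B : Matrix (Fin n) (Fin n) ℝ} (hA : A.PosDef) (hB : IsUnit B.det) :
    (Bᴴ * A * B).PosDef := by
  refine Matrix.PosDef.of_dotProduct_mulVec_pos (Matrix.isHermitian_conjTranspose_mul_mul B hA.1) fun x hx => ?_
  have hBx : B *ᵥ x ≠ 0 := by
    have hinj := Matrix.mulVec_injective_iff_isUnit.mpr ((Matrix.isUnit_iff_isUnit_det B).mpr hB)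
    intro h
    exact hx (hinj (by simpa using h))
  simpa only [Matrix.star_mulVec, Matrix.dotProduct_mulVec, Matrix.vecMul_vecMul] using
    hA.dotProduct_mulVec_pos hBx

open scoped MatrixOrder

/-- Basic facts about the real spectrum of `C₁⁻¹ C₂` for positive definite `C₁, C₂`:
it consists of positive reals, and is nonempty when `n > 0`. -/
lemma spec_facts {C₁ C₂ : Matrix (Fin n) (Fin n) ℝ} (h₁ : C₁.PosDef) (h₂ : C₂.PosDef) :
    (∀ x ∈ spectrum ℝ (C₁⁻¹ * C₂), 0 < x) ∧
      (0 < n → (spectrum ℝ (C₁⁻¹ * C₂)).Nonempty) := by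
  classical
  set R := CFC.sqrt C₁ with hRdef
  have hRR : R * R = C₁ := CFC.sqrt_mul_sqrt_self C₁ h₁.posSemidef.nonneg
  have hRherm : R.IsHermitian := (Matrix.nonneg_iff_posSemidef.mp (CFC.sqrt_nonneg C₁)).1
  have hRne : R.det ≠ 0 := by
    intro h
    apply h₁.det_pos.ne'
    rw [← hRR, Matrix.det_mul, h, zero_mul]
  have hRdet : IsUnit R.det := hRne.isUnit
  have hRu : IsUnit R := (Matrix.isUnit_iff_isUnit_det R).mpr hRdet
  set M := R⁻¹ * C₂ * R⁻¹ with hM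
  have hMpd : M.PosDef := by
    have h := posDef_conj (A := C₂) (B := R⁻¹) h₂ (R.isUnit_nonsing_inv_det hRdet)
    rwa [hRherm.inv.eq] at h
  have key : C₁⁻¹ * C₂ = R⁻¹ * M * R := by
    rw [← hRR, Matrix.mul_inv_rev, hM]
    calc R⁻¹ * R⁻¹ * C₂ = R⁻¹ * R⁻¹ * C₂ * (R⁻¹ * R) := by
          rw [Matrix.nonsing_inv_mul R hRdet, Matrix.mul_one]
      _ = R⁻¹ * (R⁻¹ * C₂ * R⁻¹) * R := by simp only [Matrix.mul_assoc]
  have hspec : spectrum ℝ (C₁⁻¹ * C₂) = Set.range hMpd.1.eigenvalues := by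
    rw [key, spec_conj R M hRu, Matrix.IsHermitian.spectrum_real_eq_range_eigenvalues hMpd.1]
  constructor
  · intro x hx
    rw [hspec] at hx
    obtain ⟨i, rfl⟩ := hx
    exact hMpd.eigenvalues_pos i
  · intro hn
    rw [hspec]
    exact ⟨_, ⟨⟨0, hn⟩, rfl⟩⟩

/-- For a finite set of positive reals, `sSup S⁻¹ = (sInf S)⁻¹`. -/
lemma sSup_inv_set {S : Set ℝ} (hfin : S.Finite) (hpos : ∀ x ∈ S, 0 < x) :
    sSup S⁻¹ = (sInf S)⁻¹ := by
  rcases S.eq_empty_or_nonempty with rfl | hne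
  · simp [Real.sSup_empty, Real.sInf_empty]
  · have ha : sInf S ∈ S := hne.csInf_mem hfin
    have hapos : 0 < sInf S := hpos _ ha
    refine IsGreatest.csSup_eq ⟨?_, ?_⟩
    · rw [Set.mem_inv, inv_inv]; exact ha
    · intro x hx
      rw [Set.mem_inv] at hx
      have h1 : sInf S ≤ x⁻¹ := csInf_le hfin.bddBelow hx
      have h2 : 0 < x⁻¹ := hpos _ hx
      calc x = (x⁻¹)⁻¹ := (inv_inv x).symm
        _ ≤ (sInf S)⁻¹ := by
          exact one_div x⁻¹ ▸ one_div (sInf S) ▸ one_div_le_one_div_of_le hapos h1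

/-- For a finite set of positive reals, `sInf S⁻¹ = (sSup S)⁻¹`. -/
lemma sInf_inv_set {S : Set ℝ} (hfin : S.Finite) (hpos : ∀ x ∈ S, 0 < x) :
    sInf S⁻¹ = (sSup S)⁻¹ := by
  rcases S.eq_empty_or_nonempty with rfl | hne
  · simp [Real.sSup_empty, Real.sInf_empty]
  · have ha : sSup S ∈ S := hne.csSup_mem hfin
    refine IsLeast.csInf_eq ⟨?_, ?_⟩
    · rw [Set.mem_inv, inv_inv]; exact ha
    · intro x hx
      rw [Set.mem_inv] at hx
      have h1 : x⁻¹ ≤ sSup S := le_csSup hfin.bddAbove hx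
      have h2 : 0 < x⁻¹ := hpos _ hx
      calc (sSup S)⁻¹ ≤ (x⁻¹)⁻¹ := by
            exact one_div (x⁻¹) ▸ one_div (sSup S) ▸ one_div_le_one_div_of_le h2 h1
        _ = x := inv_inv x

end Aux

/-- Hilbert's projective matrix metric
`ρ_HG(C₁, C₂) = log sSup S − log sInf S` where `S = spectrum ℝ (C₁⁻¹ C₂)`. -/
noncomputable def rhoHG {n : ℕ} (C₁ C₂ : Matrix (Fin n) (Fin n) ℝ) : ℝ :=
  Real.log (sSup (spectrum ℝ (C₁⁻¹ * C₂))) - Real.log (sInf (spectrum ℝ (C₁⁻¹ * C₂)))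

/-- Invariance of Hilbert's projective matrix metric under inversion and under
left-right multiplication by invertible matrices. -/
theorem rhoHG_invariance (n : ℕ) (C₁ C₂ : Matrix (Fin n) (Fin n) ℝ)
    (h₁ : C₁.PosDef) (h₂ : C₂.PosDef) :
    rhoHG C₁ C₂ = rhoHG C₁⁻¹ C₂⁻¹ ∧
    ∀ A B : Matrix (Fin n) (Fin n) ℝ, IsUnit A.det → IsUnit B.det →
      spectrum ℝ ((A * C₁ * B)⁻¹ * (A * C₂ * B)) = spectrum ℝ (C₁⁻¹ * C₂) ∧
      rhoHG (A * C₁ * B) (A * C₂ * B) = rhoHG C₁ C₂ := by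
  classical
  have hfin : (spectrum ℝ (C₁⁻¹ * C₂)).Finite := Matrix.finite_real_spectrum (A := C₁⁻¹ * C₂)
  obtain ⟨hpos, -⟩ := spec_facts h₁ h₂
  have hXu : IsUnit (C₁⁻¹ * C₂) := h₁.inv.isUnit.mul h₂.isUnit
  constructor
  · -- invariance under inversion
    have hdet₁ : IsUnit C₁.det := h₁.det_pos.ne'.isUnit
    have hdet₂ : IsUnit C₂.det := h₂.det_pos.ne'.isUnit
    have hspec : spectrum ℝ ((C₁⁻¹)⁻¹ * C₂⁻¹) = (spectrum ℝ (C₁⁻¹ * C₂))⁻¹ := by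
      rw [Matrix.nonsing_inv_nonsing_inv C₁ hdet₁, ← spec_inv _ hXu,
        ← spec_conj C₂ (C₁ * C₂⁻¹) h₂.isUnit]
      rw [Matrix.mul_inv_rev, Matrix.nonsing_inv_nonsing_inv C₁ hdet₁]
      simp only [Matrix.mul_assoc, Matrix.nonsing_inv_mul C₂ hdet₂, Matrix.mul_one]
    unfold rhoHG
    rw [hspec, sSup_inv_set hfin hpos, sInf_inv_set hfin hpos, Real.log_inv, Real.log_inv]
    ring
  · intro A B hA hB
    have key : (A * C₁ * B)⁻¹ * (A * C₂ * B) = B⁻¹ * (C₁⁻¹ * C₂) * B := by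
      rw [Matrix.mul_inv_rev, Matrix.mul_inv_rev]
      calc B⁻¹ * (C₁⁻¹ * A⁻¹) * (A * C₂ * B)
          = B⁻¹ * (C₁⁻¹ * ((A⁻¹ * A) * C₂)) * B := by simp only [Matrix.mul_assoc]
        _ = B⁻¹ * (C₁⁻¹ * C₂) * B := by
            rw [Matrix.nonsing_inv_mul A hA, Matrix.one_mul]
    have hspec : spectrum ℝ ((A * C₁ * B)⁻¹ * (A * C₂ * B)) = spectrum ℝ (C₁⁻¹ * C₂) := by
      rw [key]
      exact spec_conj B _ ((Matrix.isUnit_iff_isUnit_det B).mpr hB)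
    exact ⟨hspec, by unfold rhoHG; rw [hspec]⟩
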